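/- In a cycle of m chords C(e'_1), …, C(e'_m) in the disk forming a closed loop (consecutive chords share an endpoint index a_k, with a_1 the leftmost endpoint), the total number of internal crossings is congruent mod 2 to 1 + #{k : the cycle turns 'right' at a_k with a_{k+1} < a_k} + #{k : the cycle turns 'left' at a_k with a_{k+1} > a_k}. Abstractly: for a cyclic sequence a_1, …, a_m of distinct reals with a_1 minimal among chord endpoints and chords joining consecutive points, the crossing parity of the closed polygonal chord cycle equals 1 plus the count of descending right-turns plus ascending left-turns. -/

import Mathlib

/-- Two chords in the upper half-plane, with endpoints `p,q` and `p',q'` on the real line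
(all distinct), cross if and only if exactly one endpoint of the second chord lies strictly
between the endpoints of the first. -/
def chordCross (p q p' q' : ℝ) : Prop :=
  Xor' (p' ∈ Set.Ioo (min p q) (max p q)) (q' ∈ Set.Ioo (min p q) (max p q))

namespace Stmt14Aux

open Finset

open Classical in
/-- classical indicator with values in `ZMod 2` -/
noncomputable def ind (A : Prop) : ZMod 2 := if A then 1 else 0

lemma ind_pos {A : Prop} (h : A) : ind A = 1 := by simp [ind, h]

lemma ind_neg {A : Prop} (h : ¬ A) : ind A = 0 := by simp [ind, h]

lemma ind_congr {A B : Prop} (h : A ↔ B) : ind A = ind B := by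
  by_cases hA : A
  · rw [ind_pos hA, ind_pos (h.1 hA)]
  · rw [ind_neg hA, ind_neg (fun hb => hA (h.2 hb))]

lemma ite_eq_ind {A : Prop} [Decidable A] : (if A then (1 : ZMod 2) else 0) = ind A := by
  by_cases h : A
  · rw [if_pos h, ind_pos h]
  · rw [if_neg h, ind_neg h]

lemma zmod2_two : (2 : ZMod 2) = 0 := by decide

/-- comparison indicator -/
noncomputable def F2 (x y : ℝ) : ZMod 2 := ind (x < y)

lemma F2_self (x : ℝ) : F2 x x = 0 := ind_neg (lt_irrefl x)

lemma F2_lt {x y : ℝ} (h : x < y) : F2 x y = 1 := ind_pos h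

lemma F2_gt {x y : ℝ} (h : y < x) : F2 x y = 0 := ind_neg (lt_asymm h)

lemma F2_swap {x y : ℝ} (h : x ≠ y) : F2 x y = 1 + F2 y x := by
  rcases h.lt_or_gt with h' | h'
  · rw [F2_lt h', F2_gt h']; decide
  · rw [F2_gt h', F2_lt h']; decide

lemma xor_ind {A B : Prop} : ind (Xor' A B) = ind A + ind B := by
  by_cases hA : A <;> by_cases hB : B
  · rw [ind_neg (by simp [Xor', hA, hB]), ind_pos hA, ind_pos hB]; decide
  · rw [ind_pos (show Xor' A B from Or.inl ⟨hA, hB⟩), ind_pos hA, ind_neg hB]; decide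
  · rw [ind_pos (show Xor' A B from Or.inr ⟨hB, hA⟩), ind_neg hA, ind_pos hB]; decide
  · rw [ind_neg (by simp [Xor', hA, hB]), ind_neg hA, ind_neg hB]; decide

lemma ioo_ind {p q x : ℝ} (hxp : x ≠ p) (hxq : x ≠ q) :
    ind (x ∈ Set.Ioo (min p q) (max p q)) = F2 p x + F2 q x := by
  rcases hxp.lt_or_gt with h1 | h1 <;> rcases hxq.lt_or_gt with h2 | h2
  · rw [ind_neg (fun hm => (not_lt.2 (le_min h1.le h2.le)) hm.1), F2_gt h1, F2_gt h2]; decide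
  · rw [ind_pos ⟨lt_of_le_of_lt (min_le_right p q) h2, lt_of_lt_of_le h1 (le_max_left p q)⟩,
      F2_gt h1, F2_lt h2]; decide
  · rw [ind_pos ⟨lt_of_le_of_lt (min_le_left p q) h1, lt_of_lt_of_le h2 (le_max_right p q)⟩,
      F2_lt h1, F2_gt h2]; decide
  · rw [ind_neg (fun hm => (not_lt.2 (max_le h1.le h2.le)) hm.2), F2_lt h1, F2_lt h2]; decide

lemma cross_ind {p q p' q' : ℝ} (h3 : p' ≠ p) (h4 : p' ≠ q) (h5 : q' ≠ p) (h6 : q' ≠ q) :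
    ind (chordCross p q p' q') = F2 p p' + F2 q p' + F2 p q' + F2 q q' := by
  unfold chordCross
  rw [xor_ind, ioo_ind h3 h4, ioo_ind h5 h6]; ring

lemma ncard_ind {α : Type*} [Fintype α] (Q : α → Prop) :
    ((({x | Q x} : Set α).ncard : ZMod 2)) = ∑ x, ind (Q x) := by
  classical
  rw [Set.ncard_eq_toFinset_card', Set.toFinset_setOf, Finset.card_filter]
  push_cast
  exact Finset.sum_congr rfl fun x _ => ite_eq_ind

/-- the set of ordered pairs `(j,k)` with `j < k` -/
def PP (n : ℕ) : Finset (Fin (n+1) × Fin (n+1)) := Finset.univ.filter (fun p => p.1 < p.2)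

lemma mem_PP {n : ℕ} {p : Fin (n+1) × Fin (n+1)} : p ∈ PP n ↔ p.1 < p.2 := by simp [PP]

/-- reindexing pairs by an equivalence, sorting each image pair -/
lemma sum_PP_reindex {n : ℕ} (e : Fin (n+1) ≃ Fin (n+1)) (f : Fin (n+1) → Fin (n+1) → ZMod 2) :
    ∑ p ∈ PP n, (if e p.1 < e p.2 then f (e p.1) (e p.2) else f (e p.2) (e p.1))
      = ∑ p ∈ PP n, f p.1 p.2 := by
  refine Finset.sum_nbij'
    (i := fun p => if e p.1 < e p.2 then (e p.1, e p.2) else (e p.2, e p.1))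
    (j := fun q => if e.symm q.1 < e.symm q.2 then (e.symm q.1, e.symm q.2)
      else (e.symm q.2, e.symm q.1)) ?_ ?_ ?_ ?_ ?_
  · intro p hp
    have hp' := mem_PP.1 hp
    by_cases h : e p.1 < e p.2
    · rw [if_pos h]; exact mem_PP.2 h
    · rw [if_neg h]
      exact mem_PP.2 (lt_of_le_of_ne (not_lt.1 h) (fun hh => hp'.ne' (e.injective hh)))
  · intro q hq
    have hq' := mem_PP.1 hq
    by_cases h : e.symm q.1 < e.symm q.2
    · rw [if_pos h]; exact mem_PP.2 h
    · rw [if_neg h]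
      exact mem_PP.2 (lt_of_le_of_ne (not_lt.1 h) (fun hh => hq'.ne' (e.symm.injective hh)))
  · intro p hp
    have hp' := mem_PP.1 hp
    by_cases h : e p.1 < e p.2
    · rw [if_pos h]
      simp only [Equiv.symm_apply_apply]
      rw [if_pos hp']
    · rw [if_neg h]
      simp only [Equiv.symm_apply_apply]
      rw [if_neg (not_lt.2 hp'.le)]
  · intro q hq
    have hq' := mem_PP.1 hq
    by_cases h : e.symm q.1 < e.symm q.2
    · rw [if_pos h]
      simp only [Equiv.apply_symm_apply]
      rw [if_pos hq']
    · rw [if_neg h]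
      simp only [Equiv.apply_symm_apply]
      rw [if_neg (not_lt.2 hq'.le)]
  · intro p hp
    by_cases h : e p.1 < e p.2
    · rw [if_pos h, if_pos h]
    · rw [if_neg h, if_neg h]

lemma card_PP_fst_zero {n : ℕ} :
    ((PP n).filter (fun p => p.1 = 0)).card = n := by
  have : ((PP n).filter (fun p => p.1 = 0)).card
      = (Finset.univ.erase (0 : Fin (n+1))).card := by
    refine Finset.card_nbij' (i := fun p => p.2) (j := fun k => (0, k)) ?_ ?_ ?_ ?_
    · intro p hp
      dsimp only
      simp only [Finset.mem_coe, Finset.mem_filter] at hp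
      have h1 := mem_PP.1 hp.1
      refine Finset.mem_erase.2 ⟨?_, Finset.mem_univ _⟩
      intro h0
      rw [hp.2, h0] at h1
      exact lt_irrefl _ h1
    · intro k hk
      have hk' := (Finset.mem_erase.1 hk).1
      refine Finset.mem_filter.2 ⟨mem_PP.2 ?_, rfl⟩
      exact Fin.pos_iff_ne_zero.2 hk'
    · intro p hp
      dsimp only
      simp only [Finset.mem_coe, Finset.mem_filter] at hp
      exact Prod.ext hp.2.symm rfl
    · intro k _
      rfl
  rw [this, Finset.card_erase_of_mem (Finset.mem_univ _), Finset.card_univ, Fintype.card_fin]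
  omega

lemma sub_one_lt_sub_one {n : ℕ} {a b : Fin (n+1)} (ha : a ≠ 0) (hab : a < b) :
    a - 1 < b - 1 := by
  have hb : b ≠ 0 := by
    intro h; rw [h] at hab; exact absurd hab (Fin.not_lt_zero _)
  have hav : (a : ℕ) ≠ 0 := by intro h; exact ha (Fin.ext (by simp [h]))
  rw [Fin.lt_def, Fin.coe_sub_one, Fin.coe_sub_one, if_neg ha, if_neg hb]
  have := Fin.lt_def.1 hab
  omega

lemma zero_sub_one_not_lt {n : ℕ} {b : Fin (n+1)} (hb : b ≠ 0) :
    ¬ ((0 : Fin (n+1)) - 1 < b - 1) := by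
  rw [Fin.lt_def, Fin.coe_sub_one, Fin.coe_sub_one, if_pos rfl, if_neg hb]
  have := b.isLt
  omega

/-- the key shift lemma : shifting both coordinates of the pairs by `-1` changes the
sum by `n` (the number of pairs whose orientation gets reversed). -/
lemma sum_shift {n : ℕ} (g : Fin (n+1) → Fin (n+1) → ZMod 2)
    (hg : ∀ a b : Fin (n+1), a ≠ b → g b a = 1 + g a b) :
    ∑ p ∈ PP n, g (p.1 - 1) (p.2 - 1) = (n : ZMod 2) + ∑ p ∈ PP n, g p.1 p.2 := by
  have e : Fin (n+1) ≃ Fin (n+1) := Equiv.subRight 1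
  have hstep : ∀ p ∈ PP n, g (p.1 - 1) (p.2 - 1)
      = (if p.1 - 1 < p.2 - 1 then g (p.1 - 1) (p.2 - 1) else g (p.2 - 1) (p.1 - 1))
        + (if p.1 = 0 then 1 else 0) := by
    intro p hp
    have hp' := mem_PP.1 hp
    by_cases h0 : p.1 = 0
    · have hb : p.2 ≠ 0 := by
        intro h; rw [h0, h] at hp'; exact lt_irrefl _ hp'
      rw [if_pos h0, if_neg (by rw [h0]; exact zero_sub_one_not_lt hb)]
      have hne : p.1 - 1 ≠ p.2 - 1 := by
        intro h
        exact hp'.ne (by rwa [sub_left_inj] at h)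
      rw [hg _ _ (Ne.symm hne)]
      ring
    · rw [if_neg h0, if_pos (sub_one_lt_sub_one h0 hp'), add_zero]
  rw [Finset.sum_congr rfl hstep, Finset.sum_add_distrib]
  have h1 : ∑ p ∈ PP n,
      (if p.1 - 1 < p.2 - 1 then g (p.1 - 1) (p.2 - 1) else g (p.2 - 1) (p.1 - 1))
      = ∑ p ∈ PP n, g p.1 p.2 := by
    have := sum_PP_reindex (n := n) (Equiv.subRight 1) g
    simpa [Equiv.subRight_apply] using this
  have h2 : ∑ p ∈ PP n, (if p.1 = 0 then (1 : ZMod 2) else 0) = (n : ZMod 2) := by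
    rw [Finset.sum_boole]
    rw [show {x ∈ PP n | x.1 = 0} = (PP n).filter (fun p => p.1 = 0) from rfl, card_PP_fst_zero]
  rw [h1, h2, add_comm]

lemma sum_diag_eq {n : ℕ} (f : Fin (n+1) → Fin (n+1) → ZMod 2) :
    ∑ p ∈ Finset.univ.filter (fun p : Fin (n+1) × Fin (n+1) => p.1 = p.2), f p.1 p.2
      = ∑ j, f j j := by
  refine Finset.sum_nbij' (i := fun p => p.1) (j := fun k => (k, k)) ?_ ?_ ?_ ?_ ?_
  · intro p _; exact Finset.mem_univ _
  · intro k _; exact Finset.mem_filter.2 ⟨Finset.mem_univ _, rfl⟩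
  · intro p hp
    have := (Finset.mem_filter.1 hp).2
    exact Prod.ext rfl this
  · intro k _; rfl
  · intro p hp
    have := (Finset.mem_filter.1 hp).2
    rw [← this]

lemma sum_QQ_eq {n : ℕ} (f : Fin (n+1) → Fin (n+1) → ZMod 2) :
    ∑ p ∈ Finset.univ.filter (fun p : Fin (n+1) × Fin (n+1) => p.2 < p.1), f p.1 p.2
      = ∑ p ∈ PP n, f p.2 p.1 := by
  refine Finset.sum_nbij' (i := fun p => (p.2, p.1)) (j := fun p => (p.2, p.1)) ?_ ?_ ?_ ?_ ?_
  · intro p hp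
    exact mem_PP.2 (Finset.mem_filter.1 hp).2
  · intro p hp
    exact Finset.mem_filter.2 ⟨Finset.mem_univ _, mem_PP.1 hp⟩
  · intro p _; rfl
  · intro p _; rfl
  · intro p _; rfl

lemma F2_total {x y : ℝ} (h : x ≠ y) : F2 x y + F2 y x = 1 := by
  rcases h.lt_or_gt with h' | h'
  · rw [F2_lt h', F2_gt h']; decide
  · rw [F2_gt h', F2_lt h']; decide

lemma sum_split_pairs {n : ℕ} (f : Fin (n+1) → Fin (n+1) → ZMod 2) :
    ∑ p : Fin (n+1) × Fin (n+1), f p.1 p.2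
      = (∑ j, f j j) + ∑ p ∈ PP n, (f p.1 p.2 + f p.2 p.1) := by
  classical
  have h0 := Finset.sum_filter_add_sum_filter_not (Finset.univ : Finset (Fin (n+1) × Fin (n+1)))
    (fun p => p.1 = p.2) (fun p => f p.1 p.2)
  have h1 := Finset.sum_filter_add_sum_filter_not
    (Finset.univ.filter (fun p : Fin (n+1) × Fin (n+1) => ¬ p.1 = p.2))
    (fun p => p.1 < p.2) (fun p => f p.1 p.2)
  have e1 : (Finset.univ.filter (fun p : Fin (n+1) × Fin (n+1) => ¬ p.1 = p.2)).filter
      (fun p => p.1 < p.2) = PP n := by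
    rw [Finset.filter_filter]
    apply Finset.filter_congr
    intro p _
    simp only [and_iff_right_iff_imp]
    exact fun h => h.ne
  have e2 : (Finset.univ.filter (fun p : Fin (n+1) × Fin (n+1) => ¬ p.1 = p.2)).filter
      (fun p => ¬ p.1 < p.2)
      = Finset.univ.filter (fun p : Fin (n+1) × Fin (n+1) => p.2 < p.1) := by
    rw [Finset.filter_filter]
    apply Finset.filter_congr
    intro p _
    constructor
    · rintro ⟨hne, hnlt⟩
      exact lt_of_le_of_ne (not_lt.1 hnlt) (Ne.symm hne)
    · intro h
      exact ⟨ne_of_gt h, not_lt.2 h.le⟩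
  rw [e1, e2] at h1
  rw [← h0, ← h1, sum_diag_eq, sum_QQ_eq, Finset.sum_add_distrib]

end Stmt14Aux

open Stmt14Aux Finset

/-- A cycle of `m` chords in the upper half-plane: chord `k` has endpoints `s k` (near the
point `a k`) and `t k` (near `a (k+1)`), all `2m` endpoints distinct, with `t (k-1)` and
`s k` adjacent among all endpoints (they are the two perturbed ends at `a k`), and the
overall leftmost endpoint being `s 0`.  Then the number of crossings among the chords is
congruent mod 2 to `1` plus the number of descending right-turns (`t (k-1) < s k` and
`t k < s k`) plus the number of ascending left-turns (`s k < t (k-1)` and `s k < t k`). -/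
theorem stmt_14 (m : ℕ) [NeZero m] (hm : 2 ≤ m) (s t : Fin m → ℝ)
    (hinj : Function.Injective
      (fun p : Fin m × Bool => if p.2 then s p.1 else t p.1))
    (hadj : ∀ k : Fin m, ∀ x ∈ Set.range s ∪ Set.range t,
      x ≠ t (k - 1) → x ≠ s k →
        ¬ (min (t (k - 1)) (s k) < x ∧ x < max (t (k - 1)) (s k)))
    (hmin : ∀ x ∈ Set.range s ∪ Set.range t, s 0 ≤ x) :
    {p : Fin m × Fin m | p.1 < p.2 ∧
        chordCross (s p.1) (t p.1) (s p.2) (t p.2)}.ncard ≡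
      1 + {k : Fin m | t (k - 1) < s k ∧ t k < s k}.ncard
        + {k : Fin m | s k < t (k - 1) ∧ s k < t k}.ncard [MOD 2] := by
  classical
  obtain ⟨n, rfl⟩ : ∃ n, m = n + 1 := ⟨m - 1, by omega⟩
  -- distinctness facts
  have hst : ∀ j k, s j ≠ t k := by
    intro j k h
    have := hinj (a₁ := (j, true)) (a₂ := (k, false)) (by simpa using h)
    simp at this
  have hs_inj : ∀ {j k : Fin (n+1)}, s j = s k → j = k := by
    intro j k h
    have := hinj (a₁ := (j, true)) (a₂ := (k, true)) (by simpa using h)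
    simpa using this
  have ht_inj : ∀ {j k : Fin (n+1)}, t j = t k → j = k := by
    intro j k h
    have := hinj (a₁ := (j, false)) (a₂ := (k, false)) (by simpa using h)
    simpa using this
  -- the adjacency comparison-transfer lemma
  have key : ∀ (k : Fin (n+1)) (y : ℝ), y ∈ Set.range s ∪ Set.range t →
      y ≠ t (k-1) → y ≠ s k →
      ((y < s k ↔ y < t (k-1)) ∧ (s k < y ↔ t (k-1) < y)) := by
    intro k y hy h1 h2
    have H := hadj k y hy h1 h2
    constructor
    · constructor
      · intro h
        by_contra h'
        have ht' : t (k-1) < y := lt_of_le_of_ne (not_lt.1 h') (Ne.symm h1)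
        exact H ⟨lt_of_le_of_lt (min_le_left _ _) ht', lt_of_lt_of_le h (le_max_right _ _)⟩
      · intro h
        by_contra h'
        have hs' : s k < y := lt_of_le_of_ne (not_lt.1 h') (Ne.symm h2)
        exact H ⟨lt_of_le_of_lt (min_le_right _ _) hs', lt_of_lt_of_le h (le_max_left _ _)⟩
    · constructor
      · intro h
        by_contra h'
        have : y < t (k-1) := lt_of_le_of_ne (not_lt.1 h') h1
        exact H ⟨lt_of_le_of_lt (min_le_right _ _) h, lt_of_lt_of_le this (le_max_left _ _)⟩
      · intro h
        by_contra h'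
        have : y < s k := lt_of_le_of_ne (not_lt.1 h') h2
        exact H ⟨lt_of_le_of_lt (min_le_left _ _) h, lt_of_lt_of_le this (le_max_right _ _)⟩
  rw [← ZMod.natCast_eq_natCast_iff]
  push_cast
  rw [ncard_ind, ncard_ind, ncard_ind]
  -- restrict the crossing sum to ordered pairs
  have hLHS : ∑ p : Fin (n+1) × Fin (n+1),
        ind (p.1 < p.2 ∧ chordCross (s p.1) (t p.1) (s p.2) (t p.2))
      = ∑ p ∈ PP n, ind (chordCross (s p.1) (t p.1) (s p.2) (t p.2)) := by
    rw [PP, Finset.sum_filter]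
    apply Finset.sum_congr rfl
    intro p _
    by_cases h : p.1 < p.2
    · rw [if_pos h]
      exact ind_congr (and_iff_right h)
    · rw [if_neg h, ind_neg (fun hc => h hc.1)]
  have hcross : ∀ p ∈ PP n, ind (chordCross (s p.1) (t p.1) (s p.2) (t p.2))
      = F2 (s p.1) (s p.2) + F2 (t p.1) (s p.2) + F2 (s p.1) (t p.2) + F2 (t p.1) (t p.2) := by
    intro p hp
    have hne : p.1 ≠ p.2 := (mem_PP.1 hp).ne
    exact cross_ind (fun h => hne (hs_inj h).symm) (hst p.2 p.1)
      (Ne.symm (hst p.1 p.2)) (fun h => hne (ht_inj h).symm)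
  -- Σ1 : shift both coordinates
  have hS1 : ∑ p ∈ PP n, F2 (s p.1) (s p.2)
      = (n : ZMod 2) + ∑ p ∈ PP n, F2 (t p.1) (t p.2) := by
    have hpt : ∀ p ∈ PP n, F2 (s p.1) (s p.2)
        = (fun a b => F2 (t a) (t b)) (p.1 - 1) (p.2 - 1) := by
      intro p hp
      have hne : p.1 ≠ p.2 := (mem_PP.1 hp).ne
      have step1 : s p.1 < s p.2 ↔ t (p.1 - 1) < s p.2 :=
        (key p.1 (s p.2) (Or.inl ⟨p.2, rfl⟩) (hst p.2 (p.1 - 1))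
          (fun h => hne (hs_inj h).symm)).2
      have hsub : p.1 - 1 ≠ p.2 - 1 := fun h => hne (by rwa [sub_left_inj] at h)
      have step2 : t (p.1 - 1) < s p.2 ↔ t (p.1 - 1) < t (p.2 - 1) :=
        (key p.2 (t (p.1 - 1)) (Or.inr ⟨p.1 - 1, rfl⟩)
          (fun h => hsub (ht_inj h)) (Ne.symm (hst p.2 (p.1 - 1)))).1
      exact ind_congr (step1.trans step2)
    rw [Finset.sum_congr rfl hpt]
    exact sum_shift (fun a b => F2 (t a) (t b))
      (fun a b hab => F2_swap (fun h => hab (ht_inj h).symm))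
  -- all-pairs sum of the t-comparisons
  have hallg : ∑ p : Fin (n+1) × Fin (n+1), F2 (t p.1) (t p.2) = ((PP n).card : ZMod 2) := by
    have hdiag : ∑ j : Fin (n+1), F2 (t j) (t j) = 0 := by simp [F2_self]
    have hpair : ∀ p ∈ PP n, F2 (t p.1) (t p.2) + F2 (t p.2) (t p.1) = 1 :=
      fun p hp => F2_total (fun h => (mem_PP.1 hp).ne (ht_inj h))
    calc ∑ p : Fin (n+1) × Fin (n+1), F2 (t p.1) (t p.2)
        = (∑ j, F2 (t j) (t j))
          + ∑ p ∈ PP n, (F2 (t p.1) (t p.2) + F2 (t p.2) (t p.1)) :=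
          sum_split_pairs (fun a b => F2 (t a) (t b))
      _ = ((PP n).card : ZMod 2) := by
          rw [hdiag, Finset.sum_congr rfl hpair, Finset.sum_const, nsmul_eq_mul, mul_one,
            zero_add]
  -- the full double sum of mixed comparisons
  have hfull : ∑ p : Fin (n+1) × Fin (n+1), F2 (t p.1) (s p.2)
      = (∑ k, F2 (t (k-1)) (s k)) + ((PP n).card : ZMod 2) := by
    have hinner : ∀ k : Fin (n+1), ∑ j, F2 (t j) (s k)
        = F2 (t (k-1)) (s k) + ∑ j, F2 (t j) (t (k - 1)) := by
      intro k
      have hpt : ∀ j : Fin (n+1), F2 (t j) (s k)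
          = F2 (t j) (t (k-1)) + (if j = k - 1 then F2 (t (k-1)) (s k) else 0) := by
        intro j
        by_cases hj : j = k - 1
        · subst hj
          rw [if_pos rfl, F2_self, zero_add]
        · rw [if_neg hj, add_zero]
          exact ind_congr ((key k (t j) (Or.inr ⟨j, rfl⟩)
            (fun h => hj (ht_inj h)) (Ne.symm (hst k j))).1)
      rw [Finset.sum_congr rfl (fun j _ => hpt j), Finset.sum_add_distrib,
        Finset.sum_ite_eq' Finset.univ (k-1) (fun _ => F2 (t (k-1)) (s k)),
        if_pos (Finset.mem_univ _)]
      ring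
    have h1 : ∑ p : Fin (n+1) × Fin (n+1), F2 (t p.1) (s p.2)
        = ∑ k : Fin (n+1), ∑ j : Fin (n+1), F2 (t j) (s k) :=
      Fintype.sum_prod_type_right (f := fun p => F2 (t p.1) (s p.2))
    have hre : ∑ k : Fin (n+1), ∑ j : Fin (n+1), F2 (t j) (t (k - 1))
        = ∑ b : Fin (n+1), ∑ j : Fin (n+1), F2 (t j) (t b) :=
      Fintype.sum_equiv (Equiv.subRight 1) _ _ (fun k => by rw [Equiv.subRight_apply])
    have h2 : ∑ b : Fin (n+1), ∑ j : Fin (n+1), F2 (t j) (t b)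
        = ∑ p : Fin (n+1) × Fin (n+1), F2 (t p.1) (t p.2) :=
      (Fintype.sum_prod_type_right (f := fun p => F2 (t p.1) (t p.2))).symm
    rw [h1, Finset.sum_congr rfl (fun k _ => hinner k), Finset.sum_add_distrib, hre, h2, hallg]
  -- Σ3 : flip the orientation
  have hS3 : ∑ p ∈ PP n, F2 (s p.1) (t p.2)
      = ((PP n).card : ZMod 2) + ∑ p ∈ PP n, F2 (t p.2) (s p.1) := by
    have : ∀ p ∈ PP n, F2 (s p.1) (t p.2) = 1 + F2 (t p.2) (s p.1) :=
      fun p _ => F2_swap (hst p.1 p.2)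
    rw [Finset.sum_congr rfl this, Finset.sum_add_distrib, Finset.sum_const, nsmul_eq_mul, mul_one]
  -- splitting the full mixed sum
  have hsplit : ∑ p : Fin (n+1) × Fin (n+1), F2 (t p.1) (s p.2)
      = (∑ j, F2 (t j) (s j))
        + ((∑ p ∈ PP n, F2 (t p.1) (s p.2)) + ∑ p ∈ PP n, F2 (t p.2) (s p.1)) := by
    calc ∑ p : Fin (n+1) × Fin (n+1), F2 (t p.1) (s p.2)
        = (∑ j, F2 (t j) (s j))
          + ∑ p ∈ PP n, (F2 (t p.1) (s p.2) + F2 (t p.2) (s p.1)) :=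
          sum_split_pairs (fun a b => F2 (t a) (s b))
      _ = _ := by rw [Finset.sum_add_distrib]
  -- mixed diagonal
  have hdiagTS : ∑ j, F2 (t j) (s j) = ((n : ZMod 2) + 1) + ∑ k, F2 (s k) (t k) := by
    have : ∀ j ∈ (Finset.univ : Finset (Fin (n+1))), F2 (t j) (s j) = 1 + F2 (s j) (t j) :=
      fun j _ => F2_swap (Ne.symm (hst j j))
    rw [Finset.sum_congr rfl this, Finset.sum_add_distrib, Finset.sum_const, Finset.card_univ,
      Fintype.card_fin, nsmul_eq_mul, mul_one]
    push_cast
    ring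
  -- the right-hand side, pointwise
  have hRk : ∀ k : Fin (n+1),
      ind (t (k-1) < s k ∧ t k < s k) + ind (s k < t (k-1) ∧ s k < t k)
      = F2 (t (k-1)) (s k) + F2 (s k) (t k) := by
    intro k
    have h1 : t (k-1) ≠ s k := Ne.symm (hst k (k-1))
    have h2 : s k ≠ t k := hst k k
    rcases h1.lt_or_gt with ha | ha <;> rcases h2.lt_or_gt with hd | hd
    · rw [ind_neg (fun h => absurd h.2 (lt_asymm hd)),
        ind_neg (fun h => absurd h.1 (lt_asymm ha)), F2_lt ha, F2_lt hd]
      decide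
    · rw [ind_pos ⟨ha, hd⟩, ind_neg (fun h => absurd h.1 (lt_asymm ha)),
        F2_lt ha, F2_gt hd]
    · rw [ind_neg (fun h => absurd h.1 (lt_asymm ha)), ind_pos ⟨ha, hd⟩,
        F2_gt ha, F2_lt hd]
    · rw [ind_neg (fun h => absurd h.1 (lt_asymm ha)),
        ind_neg (fun h => absurd h.2 (lt_asymm hd)), F2_gt ha, F2_gt hd]
  have hR : (∑ k : Fin (n+1), ind (t (k-1) < s k ∧ t k < s k))
      + (∑ k : Fin (n+1), ind (s k < t (k-1) ∧ s k < t k))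
      = (∑ k, F2 (t (k-1)) (s k)) + (∑ k, F2 (s k) (t k)) := by
    rw [← Finset.sum_add_distrib, ← Finset.sum_add_distrib]
    exact Finset.sum_congr rfl (fun k _ => hRk k)
  -- assemble everything
  rw [hLHS, Finset.sum_congr rfl hcross, Finset.sum_add_distrib, Finset.sum_add_distrib,
    Finset.sum_add_distrib]
  have h20 : (2 : ZMod 2) = 0 := by decide
  linear_combination hS1 + hS3 - hsplit + hfull - hdiagTS - hR
    + ((∑ p ∈ PP n, F2 (t p.1) (t p.2)) + ((PP n).card : ZMod 2)
      - (∑ k, F2 (s k) (t k)) - 1) * h20
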